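/- For each integer d \ge 2, the hypergraph C_d is tranquil, witnessed by the labellings \lambda_F(x + r e_i) = i for each hyperedge F = {x + r e_1, ..., x + r e_d}. -/

import Mathlib

/-- One adjacency step in a multigraph given by endpoint maps `efst, esnd : E → V`,
using only edges in `S`. -/
def MStep {V E : Type*} (efst esnd : E → V) (S : Set E) (x y : V) : Prop :=
  ∃ e ∈ S, (efst e = x ∧ esnd e = y) ∨ (efst e = y ∧ esnd e = x)

/-- The number of connected components of the multigraph restricted to the edge set `S`. -/
noncomputable def numComponents {V E : Type*} (efst esnd : E → V) (S : Set E) : ℕ :=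
  Nat.card (Quotient (Relation.EqvGen.setoid (MStep efst esnd S)))

/-- An edge is a bridge if deleting it increases the number of connected components. -/
def IsBridge {V E : Type*} (efst esnd : E → V) (e : E) : Prop :=
  numComponents efst esnd Set.univ < numComponents efst esnd {e}ᶜ


/-- for `d ≥ 2`, the hypergraph `C_d` is tranquil, witnessed by the
labellings `λ_F (x + r • e_i) = i` for each hyperedge `F = {x + r • e₁, …, x + r • e_d}`:
for every closed walk `v 0, F 0, v 1, F 1, …, F (ℓ-1), v 0` (where `F i` has base point
`x i` and radius `r i > 0`, and `a i, b i` are the labels of `v i` and `v (i+1)` in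
`F i`), the projection multigraph on `{1, …, d}` with edge multiset
`{a i — b i : 0 ≤ i < ℓ}` is bridgeless. -/
theorem stmt_8 (d : ℕ) (hd : 2 ≤ d) :
    ∀ (ℓ : ℕ), 0 < ℓ →
      ∀ (v x : ℕ → Fin d → ℤ) (r : ℕ → ℤ) (a b : ℕ → Fin d),
        (∀ i < ℓ, 0 < r i) →
        (∀ i < ℓ, v i = x i + Pi.single (a i) (r i)) →
        (∀ i < ℓ, v ((i + 1) % ℓ) = x i + Pi.single (b i) (r i)) →
        (∀ i < ℓ,
          ({w | ∃ j : Fin d, w = x i + Pi.single j (r i)} : Set (Fin d → ℤ)) ≠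
          {w | ∃ j : Fin d, w = x ((i + 1) % ℓ) + Pi.single j (r ((i + 1) % ℓ))}) →
        (∀ i j, 1 ≤ i → i < j → j < ℓ → v i ≠ v j) →
        ∀ e : Fin ℓ,
          ¬ IsBridge (fun i : Fin ℓ => a i.1) (fun i : Fin ℓ => b i.1) e := by
  classical
  intro ℓ hℓ v x r a b hr hva hvb _hFne _hvne e
  set ef : Fin ℓ → Fin d := fun i => a i.1 with hef
  set es : Fin ℓ → Fin d := fun i => b i.1 with hes
  set R : Fin d → Fin d → Prop := MStep ef es ({e}ᶜ) with hR
  -- circulation condition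
  have H1 : ∀ j : Fin d,
      ∑ i ∈ Finset.range ℓ,
        ((Pi.single (b i) (r i) : Fin d → ℤ) j - (Pi.single (a i) (r i) : Fin d → ℤ) j) = 0 := by
    intro j
    have hstep : ∀ i ∈ Finset.range ℓ,
        (Pi.single (b i) (r i) : Fin d → ℤ) j - (Pi.single (a i) (r i) : Fin d → ℤ) j
          = v ((i + 1) % ℓ) j - v i j := by
      intro i hi
      rw [Finset.mem_range] at hi
      rw [hva i hi, hvb i hi]
      simp only [Pi.add_apply]
      ring
    rw [Finset.sum_congr rfl hstep, Finset.sum_sub_distrib]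
    have hbij : ∑ i ∈ Finset.range ℓ, v ((i + 1) % ℓ) j = ∑ i ∈ Finset.range ℓ, v i j := by
      apply Finset.sum_nbij' (i := fun i => (i + 1) % ℓ) (j := fun i => (i + (ℓ - 1)) % ℓ)
      · intro i hi
        rw [Finset.mem_range] at hi ⊢
        exact Nat.mod_lt _ hℓ
      · intro i hi
        rw [Finset.mem_range] at hi ⊢
        exact Nat.mod_lt _ hℓ
      · intro i hi
        rw [Finset.mem_range] at hi
        rw [Nat.mod_add_mod, show i + 1 + (ℓ - 1) = i + ℓ by omega,
          Nat.add_mod_right, Nat.mod_eq_of_lt hi]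
      · intro i hi
        rw [Finset.mem_range] at hi
        rw [Nat.mod_add_mod, show i + (ℓ - 1) + 1 = i + ℓ by omega,
          Nat.add_mod_right, Nat.mod_eq_of_lt hi]
      · intro i _
        rfl
    rw [hbij, sub_self]
  -- indicator of the component of a e
  set χ : Fin d → ℤ := fun j => if Relation.EqvGen R (a e.1) j then 1 else 0 with hχ
  have hT : ∑ i ∈ Finset.range ℓ, (χ (b i) - χ (a i)) * r i = 0 := by
    have hexp : ∀ i ∈ Finset.range ℓ, (χ (b i) - χ (a i)) * r i
        = ∑ j : Fin d, χ j *
            ((Pi.single (b i) (r i) : Fin d → ℤ) j - (Pi.single (a i) (r i) : Fin d → ℤ) j) := by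
      intro i _
      simp only [Pi.single_apply, mul_sub, mul_ite, mul_zero]
      rw [Finset.sum_sub_distrib, Finset.sum_ite_eq' Finset.univ (b i),
        Finset.sum_ite_eq' Finset.univ (a i)]
      simp [sub_mul]
    rw [Finset.sum_congr rfl hexp, Finset.sum_comm]
    rw [Finset.sum_congr rfl (fun j _ => by rw [← Finset.mul_sum, H1 j, mul_zero])]
    simp
  -- all terms for i ≠ e vanish
  have hzero : ∀ i ∈ Finset.range ℓ, i ≠ e.1 → (χ (b i) - χ (a i)) * r i = 0 := by
    intro i hi hne
    rw [Finset.mem_range] at hi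
    have hRi : R (a i) (b i) := by
      refine ⟨⟨i, hi⟩, ?_, Or.inl ⟨rfl, rfl⟩⟩
      simp only [Set.mem_compl_iff, Set.mem_singleton_iff]
      intro hcon
      exact hne (by simpa using congrArg Fin.val hcon)
    have hiff : Relation.EqvGen R (a e.1) (a i) ↔ Relation.EqvGen R (a e.1) (b i) :=
      ⟨fun h => h.trans _ _ _ (Relation.EqvGen.rel _ _ hRi),
       fun h => h.trans _ _ _ ((Relation.EqvGen.rel _ _ hRi).symm _ _)⟩
    have : χ (b i) = χ (a i) := by
      simp only [hχ]
      by_cases hc : Relation.EqvGen R (a e.1) (a i)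
      · rw [if_pos hc, if_pos (hiff.mp hc)]
      · rw [if_neg hc, if_neg (fun h => hc (hiff.mpr h))]
    rw [this, sub_self, zero_mul]
  have hsingle : (χ (b e.1) - χ (a e.1)) * r e.1 = 0 := by
    rw [← Finset.sum_eq_single_of_mem e.1 (Finset.mem_range.mpr e.2) hzero, hT]
  -- conclude a e ~ b e without edge e
  have hconn : Relation.EqvGen R (a e.1) (b e.1) := by
    have hre : r e.1 ≠ 0 := ne_of_gt (hr e.1 e.2)
    have hχa : χ (a e.1) = 1 := if_pos (Relation.EqvGen.refl _)
    by_contra hcon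
    have hχb : χ (b e.1) = 0 := if_neg hcon
    rw [hχa, hχb] at hsingle
    simp only [zero_sub, neg_mul, one_mul, neg_eq_zero] at hsingle
    exact hre hsingle
  -- the two equivalence relations coincide
  have hiff : ∀ p q : Fin d,
      Relation.EqvGen (MStep ef es Set.univ) p q ↔ Relation.EqvGen R p q := by
    intro p q
    constructor
    · intro h
      induction h with
      | rel p q hpq =>
        obtain ⟨i, -, hi⟩ := hpq
        by_cases hie : i = e
        · subst hie
          rcases hi with ⟨h1, h2⟩ | ⟨h1, h2⟩
          · rw [← h1, ← h2]; exact hconn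
          · rw [← h1, ← h2]; exact hconn.symm _ _
        · exact Relation.EqvGen.rel _ _ ⟨i, by simpa using hie, hi⟩
      | refl => exact Relation.EqvGen.refl _
      | symm _ _ _ ih => exact ih.symm _ _
      | trans _ _ _ _ _ ih1 ih2 => exact ih1.trans _ _ _ ih2
    · exact Relation.EqvGen.mono (r := R) (p := MStep ef es Set.univ) (fun p q ⟨i, _, hi⟩ => ⟨i, trivial, hi⟩) p q
  intro hbridge
  have hset : Relation.EqvGen.setoid (MStep ef es Set.univ)
      = Relation.EqvGen.setoid (MStep ef es ({e}ᶜ)) := Setoid.ext hiff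
  unfold IsBridge numComponents at hbridge
  rw [hset] at hbridge
  exact lt_irrefl _ hbridge
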